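/- Let n ≥ 2 be an integer and ρ ∈ (0,1). Then for every real ξ such that 1 + ξ·(1+(n−1)ρ) ≠ 0 and 1 + ξ·(1−ρ) ≠ 0, the following partial-fraction identity holds: det(I_n + ξ·C_n(ρ))^{-1} = (1 + ξ·(1+(n−1)ρ))^{-1}·(1 + ξ·(1−ρ))^{-(n−1)} = X₁·(1 + ξ·(1+(n−1)ρ))^{-1} + ∑_{j=1}^{n−1} X₂,j·(1 + ξ·(1−ρ))^{-j}, where X₁ = (nρ/(1−ρ+nρ))^{−n+1} and X₂,j = −((1−ρ)/(1−ρ+nρ))·(nρ/(1−ρ+nρ))^{−n+j} for j = 1, …, n−1. (In particular, the eigenvalues of C_n(ρ) are 1+(n−1)ρ with multiplicity 1 and 1−ρ with multiplicity n−1, and the coefficients X₁, X₂,1, …, X₂,n−1 are the characteristic coefficients of C_n(ρ).) -/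

import Mathlib

open Matrix

noncomputable section

/-- The `n × n` constant correlation matrix `C_n(ρ)`: ones on the diagonal,
`ρ` off the diagonal. -/
def constCorr (n : ℕ) (ρ : ℝ) : Matrix (Fin n) (Fin n) ℝ :=
  Matrix.of fun i j => if i = j then 1 else ρ

/-- Partial fraction expansion of `(a * b ^ m)⁻¹` given `b - c = K * a`. -/
lemma pf_aux (K : ℝ) (a b c : ℝ) (ha : a ≠ 0) (hb : b ≠ 0) (hc : c ≠ 0)
    (hbc : b - c = K * a) (m : ℕ) :
    (a * b ^ m)⁻¹ = c ^ (-(m : ℤ)) / a +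
      ∑ j ∈ Finset.Icc 1 m, (-K * c ^ ((j : ℤ) - (m : ℤ) - 1)) * ((b ^ j)⁻¹) := by
  induction m with
  | zero => simp
  | succ m ih =>
    have key : ∀ j : ℕ, (c : ℝ) ^ ((j : ℤ) - ((m : ℤ) + 1) - 1) =
        c⁻¹ * c ^ ((j : ℤ) - (m : ℤ) - 1) := by
      intro j
      rw [← _root_.zpow_neg_one, ← zpow_add₀ hc]
      ring_nf
    rw [Finset.sum_Icc_succ_top (by omega : 1 ≤ m + 1)]
    push_cast
    have hsum : ∑ j ∈ Finset.Icc 1 m,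
        (-K * c ^ ((j : ℤ) - ((m : ℤ) + 1) - 1)) * ((b ^ j)⁻¹)
        = c⁻¹ * ∑ j ∈ Finset.Icc 1 m,
            (-K * c ^ ((j : ℤ) - (m : ℤ) - 1)) * ((b ^ j)⁻¹) := by
      rw [Finset.mul_sum]
      refine Finset.sum_congr rfl fun j _ => ?_
      rw [key]; ring
    rw [hsum]
    have hc2 : (c : ℝ) ^ (-((m : ℤ) + 1)) = c⁻¹ * c ^ (-(m : ℤ)) := by
      rw [← _root_.zpow_neg_one, ← zpow_add₀ hc]; ring_nf
    rw [hc2]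
    have hS : ∑ j ∈ Finset.Icc 1 m,
        (-K * c ^ ((j : ℤ) - (m : ℤ) - 1)) * ((b ^ j)⁻¹)
        = (a * b ^ m)⁻¹ - c ^ (-(m : ℤ)) / a := by rw [ih]; ring
    rw [hS]
    have hcm : (c : ℝ) ^ (-(m : ℤ)) = (c ^ m)⁻¹ := by
      rw [_root_.zpow_neg, zpow_natCast]
    have hcast : ((m : ℤ) + 1) - ((m : ℤ) + 1) - 1 = -1 := by ring
    rw [hcast, hcm, _root_.zpow_neg_one]
    have hbm : (b : ℝ) ^ m ≠ 0 := pow_ne_zero _ hb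
    have hcmne : (c : ℝ) ^ m ≠ 0 := pow_ne_zero _ hc
    field_simp
    linear_combination (-(c ^ m * b ^ m)) * hbc

/-- The determinant of `I + ξ C_n(ρ)`. -/
lemma det_constCorr (n : ℕ) (hn : 2 ≤ n) (ρ ξ : ℝ) (h2 : 1 + ξ * (1 - ρ) ≠ 0) :
    Matrix.det ((1 : Matrix (Fin n) (Fin n) ℝ) + ξ • constCorr n ρ) =
      (1 + ξ * (1 + ((n : ℝ) - 1) * ρ)) * (1 + ξ * (1 - ρ)) ^ (n - 1) := by
  set b : ℝ := 1 + ξ * (1 - ρ) with hbdef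
  have hM : (1 : Matrix (Fin n) (Fin n) ℝ) + ξ • constCorr n ρ
      = b • ((1 : Matrix (Fin n) (Fin n) ℝ) +
          Matrix.replicateCol (Fin 1) (fun _ => ξ * ρ / b) * Matrix.replicateRow (Fin 1) (fun _ => (1:ℝ))) := by
    ext i j
    by_cases h : i = j
    · subst h
      simp [constCorr, Matrix.mul_apply, Matrix.one_apply]
      field_simp
      ring
    · simp [constCorr, Matrix.mul_apply, Matrix.one_apply, h]
      field_simp
  rw [hM, Matrix.det_smul]
  erw [Matrix.det_one_add_replicateCol_mul_replicateRow (ι := Fin 1)]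
  simp [dotProduct, Finset.sum_const]
  obtain ⟨m, rfl⟩ : ∃ m, n = m + 2 := ⟨n - 2, by omega⟩
  have : (m + 2 : ℕ) - 1 = m + 1 := by omega
  rw [this]
  push_cast
  field_simp
  ring

theorem constCorr_characteristic_coefficients
    (n : ℕ) (hn : 2 ≤ n) (ρ : ℝ) (hρ : ρ ∈ Set.Ioo (0 : ℝ) 1) (ξ : ℝ)
    (h1 : 1 + ξ * (1 + ((n : ℝ) - 1) * ρ) ≠ 0)
    (h2 : 1 + ξ * (1 - ρ) ≠ 0) :
    (Matrix.det ((1 : Matrix (Fin n) (Fin n) ℝ) + ξ • constCorr n ρ))⁻¹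
        = (1 + ξ * (1 + ((n : ℝ) - 1) * ρ))⁻¹ * ((1 + ξ * (1 - ρ)) ^ (n - 1))⁻¹
    ∧ (Matrix.det ((1 : Matrix (Fin n) (Fin n) ℝ) + ξ • constCorr n ρ))⁻¹
        = ((n : ℝ) * ρ / (1 - ρ + (n : ℝ) * ρ)) ^ (-(n : ℤ) + 1)
            * (1 + ξ * (1 + ((n : ℝ) - 1) * ρ))⁻¹
          + ∑ j ∈ Finset.Icc 1 (n - 1),
              (-((1 - ρ) / (1 - ρ + (n : ℝ) * ρ))
                  * ((n : ℝ) * ρ / (1 - ρ + (n : ℝ) * ρ)) ^ (-(n : ℤ) + (j : ℤ)))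
                * ((1 + ξ * (1 - ρ)) ^ j)⁻¹ := by
  obtain ⟨hρ0, hρ1⟩ := hρ
  have hdet := det_constCorr n hn ρ ξ h2
  set a : ℝ := 1 + ξ * (1 + ((n : ℝ) - 1) * ρ) with hadef
  set b : ℝ := 1 + ξ * (1 - ρ) with hbdef
  have hα : (1 : ℝ) - ρ + (n : ℝ) * ρ > 0 := by
    have hn' : (2 : ℝ) ≤ (n : ℝ) := by exact_mod_cast hn
    nlinarith
  have hαne : (1 : ℝ) - ρ + (n : ℝ) * ρ ≠ 0 := ne_of_gt hα
  set c : ℝ := (n : ℝ) * ρ / (1 - ρ + (n : ℝ) * ρ) with hcdef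
  have hc : c ≠ 0 := by
    have hn' : (2 : ℝ) ≤ (n : ℝ) := by exact_mod_cast hn
    rw [hcdef]
    positivity
  have hbc : b - c = (1 - ρ) / (1 - ρ + (n : ℝ) * ρ) * a := by
    rw [hbdef, hcdef, hadef]
    field_simp
    ring
  constructor
  · rw [hdet, mul_inv]
  · rw [hdet, pf_aux ((1 - ρ) / (1 - ρ + (n : ℝ) * ρ)) a b c h1 h2 hc hbc (n - 1)]
    congr 1
    · rw [div_eq_mul_inv]
      congr 1
      congr 1
      omega
    · refine Finset.sum_congr rfl fun j hj => ?_
      congr 2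
      have h1n : 1 ≤ n := by omega
      push_cast [Nat.cast_sub h1n]
      ring_nf

end
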